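/- Fix integers n ≥ 4 and 1 ≤ k ≤ n−1. If E : ℤ² × {0,1} → ℝ satisfies the pentagram square relation, is (n,k)-periodic, and every label E(q,ε) lies in the open interval (0,1), then Z(p) ∈ (0,1) for every p ∈ ℤ², and Z(p) ≤ E(q,ε) for every p, q ∈ ℤ² and ε ∈ {0,1}; that is, the invariant Z is a lower bound for all the edge labels. -/

import Mathlib

/-!
If all labels of an `(n,k)`-periodic pentagram labeling lie in `(0,1)`, then the
invariant `Z` lies in `(0,1)` and is a lower bound for all the edge labels.
-/

/-- The pentagram square relation for an edge labeling `E`. -/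
def PentagramRel (E : ℤ × ℤ → Fin 2 → ℝ) : Prop :=
  ∀ p : ℤ × ℤ, E p 0 * E (p + (1, 0)) 1 = E p 1 * E (p + (0, 1)) 0

/-- `(n,k)`-periodicity of a labeling: invariance under translation by `(n+k, n)`. -/
def PeriodicNK (n k : ℕ) (E : ℤ × ℤ → Fin 2 → ℝ) : Prop :=
  ∀ (p : ℤ × ℤ) (ε : Fin 2), E (p + ((n : ℤ) + (k : ℤ), (n : ℤ))) ε = E p ε

/-- The monomial `Z(p)`: the product of the labels along the monotone lattice path
from `p` to `p + (n+k, n)` consisting of all `+(1,0)` steps followed by all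
`+(0,1)` steps. -/
def Zinv (n k : ℕ) (E : ℤ × ℤ → Fin 2 → ℝ) (p : ℤ × ℤ) : ℝ :=
  (∏ i ∈ Finset.range (n + k), E (p + ((i : ℤ), 0)) 0) *
    (∏ j ∈ Finset.range n, E (p + ((n : ℤ) + (k : ℤ), (j : ℤ))) 1)

namespace ZinvAux

variable (E : ℤ × ℤ → Fin 2 → ℝ)

def Hrun (m : ℕ) (p : ℤ × ℤ) : ℝ := ∏ i ∈ Finset.range m, E (p + ((i : ℤ), 0)) 0
def Vrun (m : ℕ) (p : ℤ × ℤ) : ℝ := ∏ j ∈ Finset.range m, E (p + (0, (j : ℤ))) 1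

lemma Hrun_succ (m : ℕ) (p : ℤ × ℤ) :
    Hrun E (m + 1) p = Hrun E m p * E (p + ((m : ℤ), 0)) 0 := by
  simp [Hrun, Finset.prod_range_succ]

lemma Hrun_succ' (m : ℕ) (p : ℤ × ℤ) :
    Hrun E (m + 1) p = E p 0 * Hrun E m (p + (1, 0)) := by
  rw [Hrun, Finset.prod_range_succ', mul_comm]
  congr 1
  · simp [Prod.mk_zero_zero]
  · apply Finset.prod_congr rfl
    intro i _
    congr 1
    push_cast
    simp [Prod.ext_iff]; try ring

lemma Vrun_succ (m : ℕ) (p : ℤ × ℤ) :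
    Vrun E (m + 1) p = Vrun E m p * E (p + (0, (m : ℤ))) 1 := by
  simp [Vrun, Finset.prod_range_succ]

lemma Vrun_succ' (m : ℕ) (p : ℤ × ℤ) :
    Vrun E (m + 1) p = E p 1 * Vrun E m (p + (0, 1)) := by
  rw [Vrun, Finset.prod_range_succ', mul_comm]
  congr 1
  · simp [Prod.mk_zero_zero]
  · apply Finset.prod_congr rfl
    intro j _
    congr 1
    push_cast
    simp [Prod.ext_iff]; try ring

variable {E}

lemma exchH (hE : PentagramRel E) (m : ℕ) :
    ∀ p : ℤ × ℤ, E p 1 * Hrun E m (p + (0, 1)) = Hrun E m p * E (p + ((m : ℤ), 0)) 1 := by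
  induction m with
  | zero => intro p; simp [Hrun, Prod.mk_zero_zero]
  | succ m ih =>
    intro p
    have h1 : p + (0, 1) + (1, 0) = p + (1, 0) + (0, 1) := by simp [Prod.ext_iff]; try ring
    have h2 : p + (1, 0) + ((m : ℤ), 0) = p + (((m + 1 : ℕ) : ℤ), 0) := by
      push_cast; simp [Prod.ext_iff]; try ring
    calc E p 1 * Hrun E (m + 1) (p + (0, 1))
        = (E p 1 * E (p + (0, 1)) 0) * Hrun E m (p + (1, 0) + (0, 1)) := by
          rw [Hrun_succ', h1]; ring
      _ = (E p 0 * E (p + (1, 0)) 1) * Hrun E m (p + (1, 0) + (0, 1)) := by rw [hE p]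
      _ = E p 0 * (E (p + (1, 0)) 1 * Hrun E m (p + (1, 0) + (0, 1))) := by ring
      _ = E p 0 * (Hrun E m (p + (1, 0)) * E (p + (1, 0) + ((m : ℤ), 0)) 1) := by rw [ih]
      _ = Hrun E (m + 1) p * E (p + (((m + 1 : ℕ) : ℤ), 0)) 1 := by
          rw [Hrun_succ', h2]; ring

lemma exchV (hE : PentagramRel E) (m : ℕ) :
    ∀ p : ℤ × ℤ, Vrun E m p * E (p + (0, (m : ℤ))) 0 = E p 0 * Vrun E m (p + (1, 0)) := by
  induction m with
  | zero => intro p; simp [Vrun, Prod.mk_zero_zero]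
  | succ m ih =>
    intro p
    have h1 : p + (0, (m : ℤ)) + (0, 1) = p + (0, ((m + 1 : ℕ) : ℤ)) := by
      push_cast; simp [Prod.ext_iff]; try ring
    have h2 : p + (0, (m : ℤ)) + (1, 0) = p + (1, 0) + (0, (m : ℤ)) := by
      simp [Prod.ext_iff]; try ring
    calc Vrun E (m + 1) p * E (p + (0, ((m + 1 : ℕ) : ℤ))) 0
        = Vrun E m p * (E (p + (0, (m : ℤ))) 1 * E (p + (0, (m : ℤ)) + (0, 1)) 0) := by
          rw [Vrun_succ, h1]; ring
      _ = Vrun E m p * (E (p + (0, (m : ℤ))) 0 * E (p + (0, (m : ℤ)) + (1, 0)) 1) := by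
          rw [← hE (p + (0, (m : ℤ)))]
      _ = (Vrun E m p * E (p + (0, (m : ℤ))) 0) * E (p + (1, 0) + (0, (m : ℤ))) 1 := by
          rw [h2]; ring
      _ = (E p 0 * Vrun E m (p + (1, 0))) * E (p + (1, 0) + (0, (m : ℤ))) 1 := by rw [ih]
      _ = E p 0 * Vrun E (m + 1) (p + (1, 0)) := by rw [Vrun_succ]; ring

lemma Zinv_eq (n k : ℕ) (p : ℤ × ℤ) :
    Zinv n k E p = Hrun E (n + k) p * Vrun E n (p + ((n : ℤ) + (k : ℤ), 0)) := by
  rw [Zinv, Hrun, Vrun]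
  congr 1
  apply Finset.prod_congr rfl
  intro j _
  congr 1
  simp [Prod.ext_iff]; try ring

end ZinvAux

open ZinvAux in
/-- The invariant `Z` lies in `(0,1)` and serves as a lower bound for all edge labels. -/
theorem Zinv_mem_Ioo_and_le (n k : ℕ) (hn : 4 ≤ n) (hk1 : 1 ≤ k) (hkn : k ≤ n - 1)
    (E : ℤ × ℤ → Fin 2 → ℝ) (hE : PentagramRel E) (hper : PeriodicNK n k E)
    (h01 : ∀ (q : ℤ × ℤ) (ε : Fin 2), E q ε ∈ Set.Ioo (0 : ℝ) 1) :
    (∀ p : ℤ × ℤ, Zinv n k E p ∈ Set.Ioo (0 : ℝ) 1) ∧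
      (∀ (p q : ℤ × ℤ) (ε : Fin 2), Zinv n k E p ≤ E q ε) := by
  have hEpos : ∀ q ε, 0 < E q ε := fun q ε => (h01 q ε).1
  have hElt : ∀ q ε, E q ε < 1 := fun q ε => (h01 q ε).2
  -- positivity and ≤ 1 of runs
  have hHpos : ∀ m p, 0 < Hrun E m p := by
    intro m p; exact Finset.prod_pos fun i _ => hEpos _ _
  have hVpos : ∀ m p, 0 < Vrun E m p := by
    intro m p; exact Finset.prod_pos fun i _ => hEpos _ _
  have hHle : ∀ m p, Hrun E m p ≤ 1 := by
    intro m p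
    exact Finset.prod_le_one (fun i _ => (hEpos _ _).le) (fun i _ => (hElt _ _).le)
  have hVle : ∀ m p, Vrun E m p ≤ 1 := by
    intro m p
    exact Finset.prod_le_one (fun i _ => (hEpos _ _).le) (fun i _ => (hElt _ _).le)
  -- shift invariance
  have shiftR : ∀ p : ℤ × ℤ, Zinv n k E (p + (1, 0)) = Zinv n k E p := by
    intro p
    have key : E p 0 * Zinv n k E (p + (1, 0)) = E p 0 * Zinv n k E p := by
      have e1 : p + (1, 0) + ((n : ℤ) + (k : ℤ), 0) = p + ((n : ℤ) + (k : ℤ), 0) + (1, 0) := by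
        simp [Prod.ext_iff]; try ring
      have e2 : p + ((n : ℤ) + (k : ℤ), 0) + (0, (n : ℤ)) = p + ((n : ℤ) + (k : ℤ), (n : ℤ)) := by
        simp [Prod.ext_iff]; try ring
      have e3 : p + (((n + k : ℕ) : ℤ), 0) = p + ((n : ℤ) + (k : ℤ), 0) := by
        push_cast; simp
      calc E p 0 * Zinv n k E (p + (1, 0))
          = (E p 0 * Hrun E (n + k) (p + (1, 0))) *
              Vrun E n (p + ((n : ℤ) + (k : ℤ), 0) + (1, 0)) := by
            rw [Zinv_eq, e1]; ring
        _ = (Hrun E (n + k) p * E (p + (((n + k : ℕ) : ℤ), 0)) 0) *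
              Vrun E n (p + ((n : ℤ) + (k : ℤ), 0) + (1, 0)) := by
            rw [← Hrun_succ', ← Hrun_succ]
        _ = Hrun E (n + k) p *
              (E (p + ((n : ℤ) + (k : ℤ), 0)) 0 *
                Vrun E n (p + ((n : ℤ) + (k : ℤ), 0) + (1, 0))) := by rw [e3]; ring
        _ = Hrun E (n + k) p *
              (Vrun E n (p + ((n : ℤ) + (k : ℤ), 0)) *
                E (p + ((n : ℤ) + (k : ℤ), 0) + (0, (n : ℤ))) 0) := by
            rw [exchV hE]
        _ = Zinv n k E p * E p 0 := by
            rw [e2, hper p 0, Zinv_eq]; ring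
        _ = E p 0 * Zinv n k E p := by ring
    exact mul_left_cancel₀ (hEpos p 0).ne' key
  have shiftU : ∀ p : ℤ × ℤ, Zinv n k E (p + (0, 1)) = Zinv n k E p := by
    intro p
    have key : E p 1 * Zinv n k E (p + (0, 1)) = E p 1 * Zinv n k E p := by
      have e1 : p + (0, 1) + ((n : ℤ) + (k : ℤ), 0) = p + ((n : ℤ) + (k : ℤ), 0) + (0, 1) := by
        simp [Prod.ext_iff]; try ring
      have e2 : p + ((n : ℤ) + (k : ℤ), 0) + (0, (n : ℤ)) = p + ((n : ℤ) + (k : ℤ), (n : ℤ)) := by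
        simp [Prod.ext_iff]; try ring
      have e3 : p + (((n + k : ℕ) : ℤ), 0) = p + ((n : ℤ) + (k : ℤ), 0) := by
        push_cast; simp
      calc E p 1 * Zinv n k E (p + (0, 1))
          = (E p 1 * Hrun E (n + k) (p + (0, 1))) *
              Vrun E n (p + ((n : ℤ) + (k : ℤ), 0) + (0, 1)) := by
            rw [Zinv_eq, e1]; ring
        _ = Hrun E (n + k) p *
              (E (p + (((n + k : ℕ) : ℤ), 0)) 1 *
                Vrun E n (p + ((n : ℤ) + (k : ℤ), 0) + (0, 1))) := by
            rw [exchH hE]; ring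
        _ = Hrun E (n + k) p * Vrun E (n + 1) (p + ((n : ℤ) + (k : ℤ), 0)) := by
            rw [e3, ← Vrun_succ']
        _ = Hrun E (n + k) p *
              (Vrun E n (p + ((n : ℤ) + (k : ℤ), 0)) *
                E (p + ((n : ℤ) + (k : ℤ), 0) + (0, (n : ℤ))) 1) := by
            rw [Vrun_succ]
        _ = E p 1 * Zinv n k E p := by
            rw [e2, hper p 1, Zinv_eq]; ring
    exact mul_left_cancel₀ (hEpos p 1).ne' key
  -- Z is constant
  have hconst : ∀ p q : ℤ × ℤ, Zinv n k E p = Zinv n k E q := by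
    have hR : ∀ (a : ℤ) (p : ℤ × ℤ), Zinv n k E (p + (a, 0)) = Zinv n k E p := by
      intro a
      induction a using Int.induction_on with
      | zero => intro p; simp [Prod.mk_zero_zero]
      | succ a ih =>
        intro p
        have : p + ((a : ℤ) + 1, 0) = p + ((a : ℤ), 0) + (1, 0) := by simp [Prod.ext_iff]; try ring
        rw [this, shiftR, ih]
      | pred a ih =>
        intro p
        have h : p + (-((a : ℤ) + 1), 0) + (1, 0) = p + (-(a : ℤ), 0) := by
          simp [Prod.ext_iff]; try ring
        have h2 := shiftR (p + (-((a : ℤ) + 1), 0))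
        rw [h, ih] at h2
        have e : p + (-(a : ℤ) - 1, 0) = p + (-((a : ℤ) + 1), 0) := by
          simp [Prod.ext_iff]; try ring
        rw [e]; exact h2.symm
    have hU : ∀ (b : ℤ) (p : ℤ × ℤ), Zinv n k E (p + (0, b)) = Zinv n k E p := by
      intro b
      induction b using Int.induction_on with
      | zero => intro p; simp [Prod.mk_zero_zero]
      | succ b ih =>
        intro p
        have : p + (0, (b : ℤ) + 1) = p + (0, (b : ℤ)) + (0, 1) := by
          simp [Prod.ext_iff]; try ring
        rw [this, shiftU, ih]
      | pred b ih =>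
        intro p
        have h : p + (0, -((b : ℤ) + 1)) + (0, 1) = p + (0, -(b : ℤ)) := by
          simp [Prod.ext_iff]; try ring
        have h2 := shiftU (p + (0, -((b : ℤ) + 1)))
        rw [h, ih] at h2
        have e : p + (0, -(b : ℤ) - 1) = p + (0, -((b : ℤ) + 1)) := by
          simp [Prod.ext_iff]; try ring
        rw [e]; exact h2.symm
    intro p q
    have hq : q = p + (q.1 - p.1, 0) + (0, q.2 - p.2) := by
      simp [Prod.ext_iff]; try ring
    rw [hq, hU, hR]
  -- the lower-bound property
  have hle : ∀ (p q : ℤ × ℤ) (ε : Fin 2), Zinv n k E p ≤ E q ε := by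
    intro p q ε
    fin_cases ε
    · -- horizontal edge
      show Zinv n k E p ≤ E q 0
      obtain ⟨m, hm⟩ : ∃ m, n + k = m + 1 := ⟨n + k - 1, by omega⟩
      have hz : Zinv n k E p = E q 0 *
          (Hrun E m (q + (1, 0)) * Vrun E n (q + ((n : ℤ) + (k : ℤ), 0))) := by
        rw [hconst p q, Zinv_eq, hm, Hrun_succ']; ring
      rw [hz]
      have h1 : Hrun E m (q + (1, 0)) * Vrun E n (q + ((n : ℤ) + (k : ℤ), 0)) ≤ 1 :=
        mul_le_one₀ (hHle _ _) (hVpos _ _).le (hVle _ _)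
      have h0 : 0 < Hrun E m (q + (1, 0)) * Vrun E n (q + ((n : ℤ) + (k : ℤ), 0)) :=
        mul_pos (hHpos _ _) (hVpos _ _)
      nlinarith [hEpos q 0]
    · -- vertical edge
      show Zinv n k E p ≤ E q 1
      obtain ⟨m, hm⟩ : ∃ m, n = m + 1 := ⟨n - 1, by omega⟩
      set p' : ℤ × ℤ := q - ((n : ℤ) + (k : ℤ), 0) with hp'
      have hpq : p' + ((n : ℤ) + (k : ℤ), 0) = q := by
        simp [hp', Prod.ext_iff]; try ring
      have hz : Zinv n k E p = E q 1 *
          (Hrun E (n + k) p' * Vrun E m (q + (0, 1))) := by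
        rw [hconst p p', Zinv_eq, hpq, hm, Vrun_succ']; ring
      rw [hz]
      have h1 : Hrun E (n + k) p' * Vrun E m (q + (0, 1)) ≤ 1 :=
        mul_le_one₀ (hHle _ _) (hVpos _ _).le (hVle _ _)
      have h0 : 0 < Hrun E (n + k) p' * Vrun E m (q + (0, 1)) :=
        mul_pos (hHpos _ _) (hVpos _ _)
      nlinarith [hEpos q 1]
  refine ⟨fun p => ⟨?_, ?_⟩, hle⟩
  · rw [Zinv_eq]; exact mul_pos (hHpos _ _) (hVpos _ _)
  · exact lt_of_le_of_lt (hle p p 0) (hElt p 0)
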